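/- Fix n ≥ 1. Let A_1 be the 2n×2n real matrix with entries (A_1)_{2k−1,2k} = (A_1)_{2k,2k−1} = 1 for 1 ≤ k ≤ n, (A_1)_{2k,2k+1} = (A_1)_{2k+1,2k} = −1 for 1 ≤ k ≤ n−1, and 0 elsewhere; let D = diag(1,−1,…,−1) of size 2n, and for k ≥ 1 let A_{k+1} = A_1 ⊗ I_{(2n)^k} + D ⊗ A_k. Let β > 0 be a real root of g_n such that g_n has no root in (0,β). Then for every k ≥ 1, the minimum eigenvalue of A_k² equals kβ; equivalently, every eigenvalue μ of A_k² satisfies μ ≥ kβ and kβ is an eigenvalue of A_k². -/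

import Mathlib

open Kronecker Matrix

/-- A matrix `M` has real eigenvalue `μ` if `M x = μ x` for some nonzero vector `x`. -/
def HasEig {I : Type*} [Fintype I] (M : Matrix I I ℝ) (μ : ℝ) : Prop :=
  ∃ x : I → ℝ, x ≠ 0 ∧ M.mulVec x = μ • x

/-- The signed adjacency matrix `A_1` of the path `P_{2n}`: in 1-indexed terms,
`(A_1)_{2k−1,2k} = (A_1)_{2k,2k−1} = 1` for `1 ≤ k ≤ n` and
`(A_1)_{2k,2k+1} = (A_1)_{2k+1,2k} = −1` for `1 ≤ k ≤ n−1`, zero elsewhere.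
On the 0-indexed `Fin (2n)`, the entry at `(i, i+1)` is `1` when `i` is even and
`−1` when `i` is odd. -/
def signedPath (n : ℕ) : Matrix (Fin (2 * n)) (Fin (2 * n)) ℝ :=
  Matrix.of fun i j =>
    if (i : ℕ) + 1 = (j : ℕ) then (if (i : ℕ) % 2 = 0 then 1 else -1)
    else if (j : ℕ) + 1 = (i : ℕ) then (if (j : ℕ) % 2 = 0 then 1 else -1)
    else 0

/-- `D = diag(1, −1, 1, …, −1)` of size `2n`. -/
def altDiag (n : ℕ) : Matrix (Fin (2 * n)) (Fin (2 * n)) ℝ :=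
  Matrix.diagonal fun i => if (i : ℕ) % 2 = 0 then 1 else -1

/-- The signed adjacency matrices of `P_{2n}^k`: `APn n 0 = A_1` and
`APn n (k+1) = A_1 ⊗ I_{(2n)^(k+1)} + D ⊗ APn n k` (Kronecker products), so
`APn n k` is the matrix `A_{k+1}` of the paper; it is indexed by
`Fin (k+1) → Fin (2n)`, a type of cardinality `(2n)^(k+1)`. -/
noncomputable def APn (n : ℕ) :
    (k : ℕ) → Matrix (Fin (k + 1) → Fin (2 * n)) (Fin (k + 1) → Fin (2 * n)) ℝ
  | 0 => Matrix.reindex (Equiv.funUnique (Fin 1) (Fin (2 * n))).symm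
      (Equiv.funUnique (Fin 1) (Fin (2 * n))).symm (signedPath n)
  | (k + 1) =>
      Matrix.reindex (Fin.consEquiv fun _ : Fin (k + 2) => Fin (2 * n))
        (Fin.consEquiv fun _ : Fin (k + 2) => Fin (2 * n))
        (signedPath n ⊗ₖ
            (1 : Matrix (Fin (k + 1) → Fin (2 * n)) (Fin (k + 1) → Fin (2 * n)) ℝ)
          + altDiag n ⊗ₖ APn n k)

/-- The polynomial sequence `g_0(x) = 1`, `g_1(x) = x - 1`,
`g_k(x) = (x-2) g_{k-1}(x) - g_{k-2}(x)`. -/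
noncomputable def gPoly : ℕ → ℝ → ℝ
  | 0, _ => 1
  | 1, x => x - 1
  | (k + 2), x => (x - 2) * gPoly (k + 1) x - gPoly k x


lemma gPoly_step (k : ℕ) (x : ℝ) :
    gPoly (k + 2) x = (x - 2) * gPoly (k + 1) x - gPoly k x := rfl

lemma gPoly_zero : ∀ n : ℕ, gPoly n 0 = (-1 : ℝ) ^ n
  | 0 => by simp [gPoly]
  | 1 => by simp [gPoly]
  | (n + 2) => by
      rw [gPoly_step, gPoly_zero (n+1), gPoly_zero n]
      ring

lemma recA_zero (μ : ℝ) (n : ℕ) (u : ℕ → ℝ)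
    (h0 : μ * u 0 = u 0 - u 1)
    (hrec : ∀ j, j + 2 ≤ n → μ * u (j + 1) = 2 * u (j + 1) - u j - u (j + 2))
    (hz : u 0 = 0) : ∀ j, j ≤ n → u j = 0 := by
  have key : ∀ j, (j ≤ n → u j = 0) ∧ (j + 1 ≤ n → u (j + 1) = 0) := by
    intro j
    induction j with
    | zero =>
      constructor
      · intro _; exact hz
      · intro _; rw [hz] at h0; linarith [h0]
    | succ m ih =>
      constructor
      · intro h; exact ih.2 h
      · intro h
        have e := hrec m h
        have h1 : u m = 0 := ih.1 (by omega)
        have h2 : u (m + 1) = 0 := ih.2 (by omega)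
        rw [h1, h2] at e
        linarith
  exact fun j hj => (key j).1 hj

lemma recA (μ : ℝ) (n : ℕ) (u : ℕ → ℝ)
    (h0 : μ * u 0 = u 0 - u 1)
    (hrec : ∀ j, j + 2 ≤ n → μ * u (j + 1) = 2 * u (j + 1) - u j - u (j + 2))
    (hn0 : u n = 0) (hne : ∃ j, j < n ∧ u j ≠ 0) : gPoly n μ = 0 := by
  by_cases hz : u 0 = 0
  · obtain ⟨j, hj, hju⟩ := hne
    exact absurd (recA_zero μ n u h0 hrec hz j (le_of_lt hj)) hju
  · have key : ∀ j, (j ≤ n → u j = u 0 * ((-1) ^ j * gPoly j μ)) ∧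
        (j + 1 ≤ n → u (j + 1) = u 0 * ((-1) ^ (j + 1) * gPoly (j + 1) μ)) := by
      intro j
      induction j with
      | zero =>
        constructor
        · intro _; simp [gPoly]
        · intro _
          have hp : ((-1:ℝ)) ^ (0 + 1) = -1 := by norm_num
          rw [hp]
          show u 1 = u 0 * (-1 * gPoly 1 μ)
          simp only [gPoly]
          linear_combination h0
      | succ m ih =>
        constructor
        · intro h; exact ih.2 h
        · intro h
          have e := hrec m h
          have h1 : u m = u 0 * ((-1) ^ m * gPoly m μ) := ih.1 (by omega)
          have h2 : u (m + 1) = u 0 * ((-1) ^ (m + 1) * gPoly (m + 1) μ) := ih.2 (by omega)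
          rw [h1, h2] at e
          rw [show m + 1 + 1 = m + 2 from rfl, gPoly_step]
          have hpow : ((-1 : ℝ)) ^ (m + 2) = (-1) ^ m := by ring
          have hp1 : ((-1 : ℝ)) ^ (m + 1) = -(-1) ^ m := by ring
          rw [hp1] at e
          rw [hpow]
          linear_combination e
    rcases Nat.eq_zero_or_pos n with rfl | hn
    · obtain ⟨j, hj, _⟩ := hne; omega
    · obtain ⟨m, rfl⟩ := Nat.exists_eq_add_of_le hn
      have := (key (m)).2 (by omega)
      rw [show 1 + m = m + 1 from by omega] at hn0 ⊢
      rw [hn0] at this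
      have h2 : u 0 * ((-1 : ℝ) ^ (m + 1) * gPoly (m + 1) μ) = 0 := this.symm
      rcases mul_eq_zero.mp h2 with h | h
      · exact absurd h hz
      · rcases mul_eq_zero.mp h with h | h
        · exact absurd h (by positivity)
        · exact h

open Kronecker Matrix

noncomputable def sgn (i : ℕ) : ℝ := if i % 2 = 0 then 1 else -1

/-- extend a `Fin m`-vector to `ℕ` by zero -/
noncomputable def ext2 (m : ℕ) (x : Fin m → ℝ) : ℕ → ℝ :=
  fun i => if h : i < m then x ⟨i, h⟩ else 0

lemma ext2_ge (m : ℕ) (x : Fin m → ℝ) (i : ℕ) (h : m ≤ i) : ext2 m x i = 0 := by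
  simp [ext2, Nat.not_lt.mpr h]

lemma ext2_lt (m : ℕ) (x : Fin m → ℝ) (i : ℕ) (h : i < m) : ext2 m x i = x ⟨i, h⟩ := by
  simp [ext2, h]

lemma signedPath_apply (n : ℕ) (a j : Fin (2 * n)) :
    signedPath n a j = (if (a : ℕ) + 1 = (j : ℕ) then sgn a else 0) +
      (if (j : ℕ) + 1 = (a : ℕ) then sgn j else 0) := by
  unfold signedPath sgn
  simp only [Matrix.of_apply]
  split_ifs <;> first | ring1 | (exfalso; omega)

lemma sum_ite_coe {m : ℕ} (t : ℕ) (f : Fin m → ℝ) :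
    (∑ j : Fin m, if t = (j : ℕ) then f j else 0) =
      if h : t < m then f ⟨t, h⟩ else 0 := by
  split_ifs with h
  · rw [Finset.sum_eq_single (⟨t, h⟩ : Fin m)]
    · simp
    · intro b _ hb
      rw [if_neg]
      intro he
      exact hb (by apply Fin.ext; simp [← he])
    · intro hmem; exact absurd (Finset.mem_univ _) hmem
  · apply Finset.sum_eq_zero
    intro j _
    rw [if_neg]
    intro he
    exact h (he ▸ j.isLt)

lemma signedPath_mulVec (n : ℕ) (x : Fin (2 * n) → ℝ) (i : ℕ) (hi : i < 2 * n) :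
    (signedPath n).mulVec x ⟨i, hi⟩ =
      sgn i * ext2 (2 * n) x (i + 1) +
        (if i = 0 then 0 else sgn (i - 1) * ext2 (2 * n) x (i - 1)) := by
  unfold Matrix.mulVec dotProduct
  simp only [signedPath_apply, add_mul]
  rw [Finset.sum_add_distrib]
  congr 1
  · have : ∀ j : Fin (2 * n),
        (if (i : ℕ) + 1 = (j : ℕ) then sgn i else 0) * x j =
        (if i + 1 = (j : ℕ) then sgn i * x j else 0) := by
      intro j; split_ifs <;> ring
    rw [Finset.sum_congr rfl (fun j _ => this j), sum_ite_coe (i + 1) (fun j => sgn i * x j)]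
    unfold ext2
    split_ifs <;> simp
  · rcases Nat.eq_zero_or_pos i with rfl | hpos
    · rw [if_pos rfl]
      apply Finset.sum_eq_zero
      intro j _
      rw [if_neg (by omega)]
      ring
    · rw [if_neg (by omega)]
      have : ∀ j : Fin (2 * n),
          (if (j : ℕ) + 1 = i then sgn j else 0) * x j =
          (if i - 1 = (j : ℕ) then sgn (i-1) * x j else 0) := by
        intro j
        by_cases h : (j : ℕ) + 1 = i
        · rw [if_pos h, if_pos (by omega)]
          have : (j : ℕ) = i - 1 := by omega
          rw [this]
        · rw [if_neg h, if_neg (by omega), zero_mul]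
      rw [Finset.sum_congr rfl (fun j _ => this j),
        sum_ite_coe (i - 1) (fun j => sgn (i-1) * x j)]
      rw [dif_pos (by omega : i - 1 < 2 * n)]
      rw [ext2_lt _ _ _ (by omega : i - 1 < 2 * n)]

lemma sgn0 : sgn 0 = 1 := by simp [sgn]
lemma sgn1 : sgn 1 = -1 := by simp [sgn]
lemma sgn2 : sgn 2 = 1 := by simp [sgn]

lemma w_formula (n : ℕ) (x : Fin (2 * n) → ℝ) (i : ℕ) (hi : i < 2 * n) :
    ext2 (2 * n) ((signedPath n).mulVec x) i =
      sgn i * ext2 (2 * n) x (i + 1) +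
        (if i = 0 then 0 else sgn (i - 1) * ext2 (2 * n) x (i - 1)) := by
  rw [ext2_lt _ _ _ hi]; exact signedPath_mulVec n x i hi

lemma sgn_even (j : ℕ) : sgn (2 * j) = 1 := by
  simp [sgn, Nat.mul_mod_right]

lemma sgn_odd (j : ℕ) : sgn (2 * j + 1) = -1 := by
  have : (2 * j + 1) % 2 = 1 := by omega
  simp [sgn, this]

section SqFormulas

variable (n : ℕ) (x : Fin (2 * n) → ℝ)

local notation "y" => ext2 (2 * n) x
local notation "w" => ext2 (2 * n) (Matrix.mulVec (signedPath n) x)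
local notation "P" => Matrix.mulVec (signedPath n) (Matrix.mulVec (signedPath n) x)

lemma sq_even0 (h0 : 0 < 2 * n) : P ⟨0, h0⟩ = y 0 - y 2 := by
  have hn : 1 ≤ n := by omega
  rw [signedPath_mulVec n _ 0 h0]
  rw [if_pos rfl, w_formula n x 1 (by omega)]
  rw [if_neg (by omega)]
  rw [show (1 : ℕ) - 1 = 0 from rfl]
  simp only [sgn0, sgn1]
  ring

lemma sq_evenS (m : ℕ) (hm : m + 1 < n) :
    P ⟨2 * (m + 1), by omega⟩ =
      (y (2 * (m + 1)) - y (2 * (m + 1) + 2)) + (y (2 * (m + 1)) - y (2 * m)) := by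
  rw [signedPath_mulVec n _ (2 * (m + 1)) (by omega)]
  rw [if_neg (by omega)]
  rw [show 2 * (m + 1) - 1 = 2 * m + 1 from by omega]
  rw [w_formula n x (2 * (m + 1) + 1) (by omega)]
  rw [w_formula n x (2 * m + 1) (by omega)]
  rw [if_neg (by omega), if_neg (by omega)]
  rw [show 2 * (m + 1) + 1 - 1 = 2 * (m + 1) from by omega]
  rw [show 2 * m + 1 - 1 = 2 * m from by omega]
  rw [show 2 * m + 1 + 1 = 2 * (m + 1) from by omega]
  rw [sgn_even (m + 1), sgn_odd (m + 1), sgn_odd m, sgn_even m]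
  ring

lemma sq_odd0 (h : 0 < n) :
    P ⟨1, by omega⟩ = (if 1 < n then y 1 - y 3 else 0) + y 1 := by
  rw [signedPath_mulVec n _ 1 (by omega)]
  rw [if_neg (by omega)]
  rw [show (1 : ℕ) - 1 = 0 from rfl]
  rw [w_formula n x 0 (by omega), if_pos rfl]
  by_cases h1 : 1 < n
  · rw [if_pos h1]
    rw [w_formula n x 2 (by omega), if_neg (by omega)]
    rw [show (2 : ℕ) - 1 = 1 from rfl]
    simp only [sgn0, sgn1, sgn2]
    ring
  · rw [if_neg h1]
    rw [ext2_ge _ _ 2 (by omega)]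
    simp only [sgn0, sgn1]
    ring

lemma sq_oddS (m : ℕ) (hm : m + 1 < n) :
    P ⟨2 * (m + 1) + 1, by omega⟩ =
      (if m + 2 < n then y (2 * (m + 1) + 1) - y (2 * (m + 1) + 3) else 0) +
        (y (2 * (m + 1) + 1) - y (2 * m + 1)) := by
  rw [signedPath_mulVec n _ (2 * (m + 1) + 1) (by omega)]
  rw [if_neg (by omega)]
  rw [show 2 * (m + 1) + 1 - 1 = 2 * (m + 1) from by omega]
  rw [w_formula n x (2 * (m + 1)) (by omega), if_neg (by omega)]
  rw [show 2 * (m + 1) - 1 = 2 * m + 1 from by omega]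
  rw [sgn_odd (m + 1), sgn_even (m + 1), sgn_odd m]
  by_cases h2 : m + 2 < n
  · rw [if_pos h2]
    rw [show 2 * (m + 1) + 1 + 1 = 2 * (m + 2) from by omega]
    rw [w_formula n x (2 * (m + 2)) (by omega), if_neg (by omega)]
    rw [show 2 * (m + 2) - 1 = 2 * (m + 1) + 1 from by omega]
    rw [show 2 * (m + 2) + 1 = 2 * (m + 1) + 3 from by omega]
    rw [sgn_even (m + 2), sgn_odd (m + 1)]
    ring
  · rw [if_neg h2]
    rw [show 2 * (m + 1) + 1 + 1 = 2 * (m + 2) from by omega]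
    rw [ext2_ge _ _ (2 * (m + 2)) (by omega)]
    ring

end SqFormulas

lemma base_root (n : ℕ) (hn : 1 ≤ n) (μ : ℝ) (x : Fin (2 * n) → ℝ) (hx : x ≠ 0)
    (he : (signedPath n).mulVec ((signedPath n).mulVec x) = μ • x) : gPoly n μ = 0 := by
  set y := ext2 (2 * n) x with hy
  have hev : ∀ (i : ℕ) (hi : i < 2 * n),
      (signedPath n).mulVec ((signedPath n).mulVec x) ⟨i, hi⟩ = μ * y i := by
    intro i hi
    rw [he]
    simp only [Pi.smul_apply, smul_eq_mul]
    rw [hy, ext2_lt _ _ _ hi]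
  obtain ⟨i0, hi0⟩ : ∃ i0, x i0 ≠ 0 := Function.ne_iff.mp hx
  have heq0 : μ * y 0 = y 0 - y 2 := by
    rw [← hev 0 (by omega)]; exact sq_even0 n x (by omega)
  have hevS : ∀ j, j + 2 ≤ n →
      μ * y (2 * (j + 1)) = 2 * y (2 * (j + 1)) - y (2 * j) - y (2 * (j + 2)) := by
    intro j hj
    have h1 := sq_evenS n x j (by omega)
    rw [hev (2 * (j + 1)) (by omega)] at h1
    rw [show 2 * (j + 1) + 2 = 2 * (j + 2) from by omega] at h1
    linarith
  have hodd0 : 0 < n → μ * y 1 = (if 1 < n then y 1 - y 3 else 0) + y 1 := by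
    intro h
    rw [← hev 1 (by omega)]; exact sq_odd0 n x h
  have hoddS : ∀ m, m + 1 < n →
      μ * y (2 * (m + 1) + 1) =
        (if m + 2 < n then y (2 * (m + 1) + 1) - y (2 * (m + 1) + 3) else 0) +
          (y (2 * (m + 1) + 1) - y (2 * m + 1)) := by
    intro m hm
    rw [← hev (2 * (m + 1) + 1) (by omega)]; exact sq_oddS n x m hm
  rcases Nat.even_or_odd (i0 : ℕ) with ⟨j0, hj0⟩ | ⟨j0, hj0⟩
  · -- even case
    apply recA μ n (fun t => y (2 * t))
    · simpa using heq0
    · intro j hj; simpa using hevS j hj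
    · exact ext2_ge _ _ _ (le_refl _)
    · refine ⟨j0, by omega, ?_⟩
      have : y (2 * j0) = x i0 := by
        rw [hy, ext2_lt _ _ _ (by omega)]
        congr 1
        apply Fin.ext
        simp only [Fin.val_mk]
        omega
      rw [this]; exact hi0
  · -- odd case
    apply recA μ n (fun t => if t < n then y (2 * (n - 1 - t) + 1) else 0)
    · simp only [if_pos (by omega : 0 < n)]
      by_cases h1 : 1 < n
      · rw [if_pos h1]
        have h2 := hoddS (n - 2) (by omega)
        rw [show n - 2 + 1 = n - 1 from by omega, if_neg (by omega : ¬ n - 2 + 2 < n)] at h2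
        rw [show n - 1 - 0 = n - 1 from by omega, show n - 1 - 1 = n - 2 from by omega]
        linarith
      · rw [if_neg h1]
        have h2 := hodd0 (by omega)
        rw [if_neg h1] at h2
        rw [show n - 1 - 0 = 0 from by omega]
        linarith
    · intro j hj
      rw [if_pos (by omega : j + 1 < n), if_pos (by omega : j < n)]
      rw [show n - 1 - j = (n - 2 - j) + 1 from by omega]
      by_cases hm : n - 2 - j = 0
      · rw [if_neg (by omega : ¬ j + 2 < n)]
        rw [hm]
        have h2 := hodd0 (by omega)
        rw [if_pos (by omega : 1 < n)] at h2
        rw [show n - 1 - (j + 1) = 0 from by omega]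
        simp only [Nat.mul_zero, Nat.zero_add, Nat.mul_one]
        rw [show 2 * 1 + 1 = 3 from by omega]
        linarith
      · obtain ⟨p, hp⟩ : ∃ p, n - 2 - j = p + 1 := ⟨n - 2 - j - 1, by omega⟩
        rw [if_pos (by omega : j + 2 < n)]
        rw [show n - 1 - (j + 1) = p + 1 from by omega,
          show n - 1 - (j + 2) = p from by omega, hp]
        have h2 := hoddS p (by omega)
        rw [if_pos (by omega : p + 2 < n)] at h2
        rw [show 2 * (p + 1) + 3 = 2 * (p + 1 + 1) + 1 from by omega] at h2
        linarith
    · rw [if_neg (by omega)]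
    · refine ⟨n - 1 - j0, by omega, ?_⟩
      rw [if_pos (by omega : n - 1 - j0 < n)]
      rw [show n - 1 - (n - 1 - j0) = j0 from by omega]
      have : y (2 * j0 + 1) = x i0 := by
        rw [hy, ext2_lt _ _ _ (by omega)]
        congr 1
        apply Fin.ext
        simp only [Fin.val_mk]
        omega
      rw [this]; exact hi0

lemma base_exists (n : ℕ) (hn : 1 ≤ n) (β : ℝ) (hroot : gPoly n β = 0) :
    ∃ x : Fin (2 * n) → ℝ, x ≠ 0 ∧
      (signedPath n).mulVec ((signedPath n).mulVec x) = β • x := by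
  set U : ℕ → ℝ := fun j => (-1) ^ j * gPoly j β with hU
  set x : Fin (2 * n) → ℝ :=
    fun i => if (i : ℕ) % 2 = 0 then U ((i : ℕ) / 2) else 0 with hxdef
  have hU0 : U 0 = 1 := by simp [hU, gPoly]
  have hU1 : β * U 0 = U 0 - U 1 := by
    simp only [hU, pow_zero, pow_one, one_mul]
    show β * gPoly 0 β = gPoly 0 β - -1 * gPoly 1 β
    simp [gPoly]
  have hUrec : ∀ m, U (m + 2) = 2 * U (m + 1) - U m - β * U (m + 1) := by
    intro m
    simp only [hU, gPoly_step]
    have h1 : ((-1 : ℝ)) ^ (m + 2) = (-1) ^ m := by ring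
    have h2 : ((-1 : ℝ)) ^ (m + 1) = -(-1) ^ m := by ring
    rw [h1, h2]
    ring
  have hyev : ∀ j, j ≤ n → ext2 (2 * n) x (2 * j) = U j := by
    intro j hj
    rcases Nat.lt_or_ge j n with h | h
    · rw [ext2_lt _ _ _ (by omega)]
      simp only [hxdef]
      rw [if_pos (by simp [Nat.mul_mod_right])]
      congr 1
      simp [Nat.mul_div_cancel_left]
    · have hjn : j = n := by omega
      rw [ext2_ge _ _ _ (by omega), hjn, hU]
      simp [hroot]
  have hyodd : ∀ j, ext2 (2 * n) x (2 * j + 1) = 0 := by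
    intro j
    rcases Nat.lt_or_ge (2 * j + 1) (2 * n) with h | h
    · rw [ext2_lt _ _ _ h]
      simp only [hxdef]
      rw [if_neg (by omega)]
    · exact ext2_ge _ _ _ h
  refine ⟨x, ?_, ?_⟩
  · intro hzero
    have h1 : x ⟨0, by omega⟩ = 1 := by
      show (if (0 : ℕ) % 2 = 0 then U (0 / 2) else 0) = 1
      rw [if_pos rfl]
      exact hU0
    rw [hzero] at h1
    simpa using h1
  · funext i
    have hsmul : (β • x) i = β * x i := rfl
    rcases Nat.even_or_odd (i : ℕ) with ⟨j, hj⟩ | ⟨j, hj⟩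
    · have hieq : i = ⟨2 * j, by omega⟩ := by
        apply Fin.ext; simp only [Fin.val_mk]; omega
      have hxi : x i = U j := by
        rw [hxdef, hieq]
        simp only [Fin.val_mk]
        rw [if_pos (by simp [Nat.mul_mod_right])]
        congr 1
        simp [Nat.mul_div_cancel_left]
      rw [hsmul, hxi, hieq]
      rcases Nat.eq_zero_or_pos j with rfl | hjpos
      · rw [show (⟨2 * 0, by omega⟩ : Fin (2 * n)) = ⟨0, by omega⟩ from rfl]
        rw [sq_even0 n x (by omega)]
        have e0 : ext2 (2 * n) x 0 = U 0 := by
          have := hyev 0 (by omega); simpa using this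
        have e2 : ext2 (2 * n) x 2 = U 1 := by
          have := hyev 1 (by omega); simpa using this
        rw [e0, e2]
        linarith [hU1]
      · obtain ⟨m, rfl⟩ : ∃ m, j = m + 1 := ⟨j - 1, by omega⟩
        rw [sq_evenS n x m (by omega)]
        rw [show 2 * (m + 1) + 2 = 2 * (m + 2) from by omega]
        rw [hyev (m + 1) (by omega), hyev m (by omega), hyev (m + 2) (by omega)]
        linarith [hUrec m]
    · have hieq : i = ⟨2 * j + 1, by omega⟩ := by
        apply Fin.ext; simp only [Fin.val_mk]; omega
      have hxi : x i = 0 := by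
        rw [hxdef, hieq]
        simp only [Fin.val_mk]
        rw [if_neg (by omega)]
      rw [hsmul, hxi, hieq, mul_zero]
      rcases Nat.eq_zero_or_pos j with rfl | hjpos
      · rw [show (⟨2 * 0 + 1, by omega⟩ : Fin (2 * n)) = ⟨1, by omega⟩ from rfl]
        rw [sq_odd0 n x (by omega)]
        have e1 : ext2 (2 * n) x 1 = 0 := by
          have := hyodd 0; simpa using this
        have e3 : ext2 (2 * n) x 3 = 0 := by
          have := hyodd 1; simpa using this
        rw [e1, e3]
        split_ifs <;> ring
      · obtain ⟨m, rfl⟩ : ∃ m, j = m + 1 := ⟨j - 1, by omega⟩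
        rw [sq_oddS n x m (by omega)]
        rw [show 2 * (m + 1) + 3 = 2 * (m + 2) + 1 from by omega]
        rw [hyodd (m + 1), hyodd m, hyodd (m + 2)]
        split_ifs <;> ring
section Infra

variable {I J : Type*} [Fintype I] [Fintype J]

lemma dotProduct_self_nonneg (v : I → ℝ) : 0 ≤ v ⬝ᵥ v :=
  Finset.sum_nonneg fun i _ => mul_self_nonneg _

lemma dotProduct_self_pos' {v : I → ℝ} (hv : v ≠ 0) : 0 < v ⬝ᵥ v :=
  lt_of_le_of_ne (dotProduct_self_nonneg v)
    (fun h => hv (dotProduct_self_eq_zero.mp h.symm))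

lemma hasEig_sq_nonneg {S : Matrix I I ℝ} (hS : Sᵀ = S) {μ : ℝ}
    (h : HasEig (S * S) μ) : 0 ≤ μ := by
  obtain ⟨x, hx, he⟩ := h
  have h1 : x ⬝ᵥ ((S * S) *ᵥ x) = (S *ᵥ x) ⬝ᵥ (S *ᵥ x) := by
    rw [← Matrix.mulVec_mulVec, Matrix.dotProduct_mulVec]
    congr 1
    rw [← Matrix.mulVec_transpose, hS]
  have h2 : x ⬝ᵥ ((S * S) *ᵥ x) = μ * (x ⬝ᵥ x) := by
    rw [he, dotProduct_smul, smul_eq_mul]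
  have h3 : 0 < x ⬝ᵥ x := dotProduct_self_pos' hx
  nlinarith [dotProduct_self_nonneg (S *ᵥ x)]

lemma isHermitian_of_symm {M : Matrix I I ℝ} (h : Mᵀ = M) : M.IsHermitian := by
  rw [Matrix.IsHermitian, Matrix.conjTranspose_eq_transpose_of_trivial]
  exact h

lemma psd_add {A B : Matrix I I ℝ} (hA : A.PosSemidef) (hB : B.PosSemidef) :
    (A + B).PosSemidef :=
  Matrix.PosSemidef.of_dotProduct_mulVec_nonneg (hA.1.add hB.1) fun x => by
    rw [Matrix.add_mulVec, dotProduct_add]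
    exact add_nonneg (hA.dotProduct_mulVec_nonneg x) (hB.dotProduct_mulVec_nonneg x)

lemma psd_of_hasEig_ge [DecidableEq I] {S : Matrix I I ℝ} (hS : Sᵀ = S)
    {c : ℝ} (h : ∀ μ, HasEig S μ → c ≤ μ) : (S - c • 1).PosSemidef := by
  have hHt : (S - c • (1 : Matrix I I ℝ))ᵀ = S - c • 1 := by
    rw [Matrix.transpose_sub, Matrix.transpose_smul, Matrix.transpose_one, hS]
  have hH : (S - c • (1 : Matrix I I ℝ)).IsHermitian := isHermitian_of_symm hHt
  apply (Matrix.IsHermitian.posSemidef_iff_eigenvalues_nonneg hH).mpr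
  intro i
  set μ := hH.eigenvalues i with hμ
  have hev := hH.mulVec_eigenvectorBasis i
  have hvne : (⇑(hH.eigenvectorBasis i) : I → ℝ) ≠ 0 := by
    intro h0
    apply hH.eigenvectorBasis.orthonormal.ne_zero i
    ext j
    exact congr_fun h0 j
  have hSE : HasEig S (μ + c) := by
    refine ⟨⇑(hH.eigenvectorBasis i), hvne, ?_⟩
    have h1 : (S - c • (1 : Matrix I I ℝ)) *ᵥ ⇑(hH.eigenvectorBasis i) =
        S *ᵥ ⇑(hH.eigenvectorBasis i) - c • ⇑(hH.eigenvectorBasis i) := by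
      rw [Matrix.sub_mulVec, Matrix.smul_mulVec, Matrix.one_mulVec]
    rw [h1] at hev
    have : S *ᵥ ⇑(hH.eigenvectorBasis i) =
        μ • ⇑(hH.eigenvectorBasis i) + c • ⇑(hH.eigenvectorBasis i) := by
      rw [← hev]; abel
    rw [this, ← add_smul]
  have := h (μ + c) hSE
  exact (by linarith : (0 : ℝ) ≤ μ)

lemma hasEig_ge_of_psd [DecidableEq I] {S : Matrix I I ℝ} {c : ℝ}
    (hpsd : (S - c • (1 : Matrix I I ℝ)).PosSemidef) {μ : ℝ} (h : HasEig S μ) : c ≤ μ := by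
  obtain ⟨x, hx, he⟩ := h
  have h2 := hpsd.dotProduct_mulVec_nonneg x
  have hstar : star x = x := by ext i; simp
  rw [hstar] at h2
  have h1 : (S - c • (1 : Matrix I I ℝ)) *ᵥ x = (μ - c) • x := by
    rw [Matrix.sub_mulVec, Matrix.smul_mulVec, Matrix.one_mulVec, he, ← sub_smul]
  rw [h1, dotProduct_smul, smul_eq_mul] at h2
  have h3 : 0 < x ⬝ᵥ x := dotProduct_self_pos' hx
  nlinarith

lemma kron_one_mulVec [DecidableEq J] (X : Matrix I I ℝ) (z : I × J → ℝ) (i : I) (j : J) :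
    ((X ⊗ₖ (1 : Matrix J J ℝ)) *ᵥ z) (i, j) = (X *ᵥ (fun i' => z (i', j))) i := by
  unfold Matrix.mulVec dotProduct
  rw [Fintype.sum_prod_type]
  apply Finset.sum_congr rfl
  intro i' _
  simp [Matrix.one_apply, mul_ite, ite_mul, Finset.sum_ite_eq]

lemma one_kron_mulVec [DecidableEq I] (Y : Matrix J J ℝ) (z : I × J → ℝ) (i : I) (j : J) :
    (((1 : Matrix I I ℝ) ⊗ₖ Y) *ᵥ z) (i, j) = (Y *ᵥ (fun j' => z (i, j'))) j := by
  unfold Matrix.mulVec dotProduct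
  rw [Fintype.sum_prod_type]
  rw [Finset.sum_eq_single i]
  · apply Finset.sum_congr rfl
    intro j' _
    simp [Matrix.one_apply]
  · intro b _ hb
    apply Finset.sum_eq_zero
    intro j' _
    simp [Matrix.one_apply, Ne.symm hb]
  · intro hmem; exact absurd (Finset.mem_univ _) hmem

lemma psd_kron_one [DecidableEq J] {X : Matrix I I ℝ} (hX : X.PosSemidef) :
    (X ⊗ₖ (1 : Matrix J J ℝ)).PosSemidef := by
  have hXt : Xᵀ = X := by
    rw [← Matrix.conjTranspose_eq_transpose_of_trivial]; exact hX.1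
  refine Matrix.PosSemidef.of_dotProduct_mulVec_nonneg ?_ ?_
  · apply isHermitian_of_symm
    ext ⟨i, j⟩ ⟨i', j'⟩
    simp only [Matrix.transpose_apply, Matrix.kroneckerMap_apply, Matrix.one_apply]
    have hx : X i' i = X i i' := congr_fun (congr_fun hXt i) i'
    rw [hx]
    by_cases h : j = j'
    · rw [if_pos h.symm, if_pos h]
    · rw [if_neg (fun hh => h hh.symm), if_neg h]
  · intro z
    have hstar : star z = z := by ext p; simp
    rw [hstar]
    have hsum : z ⬝ᵥ ((X ⊗ₖ (1 : Matrix J J ℝ)) *ᵥ z) =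
        ∑ j : J, ((fun i => z (i, j)) ⬝ᵥ (X *ᵥ fun i => z (i, j))) := by
      unfold dotProduct
      rw [Fintype.sum_prod_type_right]
      apply Finset.sum_congr rfl
      intro j _
      apply Finset.sum_congr rfl
      intro i _
      rw [kron_one_mulVec]
    rw [hsum]
    apply Finset.sum_nonneg
    intro j _
    have := hX.dotProduct_mulVec_nonneg (fun i => z (i, j))
    rwa [show star (fun i => z (i, j)) = fun i => z (i, j) from by ext i; simp] at this

lemma psd_one_kron [DecidableEq I] {Y : Matrix J J ℝ} (hY : Y.PosSemidef) :
    ((1 : Matrix I I ℝ) ⊗ₖ Y).PosSemidef := by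
  have hYt : Yᵀ = Y := by
    rw [← Matrix.conjTranspose_eq_transpose_of_trivial]; exact hY.1
  refine Matrix.PosSemidef.of_dotProduct_mulVec_nonneg ?_ ?_
  · apply isHermitian_of_symm
    ext ⟨i, j⟩ ⟨i', j'⟩
    simp only [Matrix.transpose_apply, Matrix.kroneckerMap_apply, Matrix.one_apply]
    have hy : Y j' j = Y j j' := congr_fun (congr_fun hYt j) j'
    rw [hy]
    by_cases h : i = i'
    · rw [if_pos h.symm, if_pos h]
    · rw [if_neg (fun hh => h hh.symm), if_neg h]
  · intro z
    have hstar : star z = z := by ext p; simp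
    rw [hstar]
    have hsum : z ⬝ᵥ (((1 : Matrix I I ℝ) ⊗ₖ Y) *ᵥ z) =
        ∑ i : I, ((fun j => z (i, j)) ⬝ᵥ (Y *ᵥ fun j => z (i, j))) := by
      unfold dotProduct
      rw [Fintype.sum_prod_type]
      apply Finset.sum_congr rfl
      intro i _
      apply Finset.sum_congr rfl
      intro j _
      rw [one_kron_mulVec]
    rw [hsum]
    apply Finset.sum_nonneg
    intro i _
    have := hY.dotProduct_mulVec_nonneg (fun j => z (i, j))
    rwa [show star (fun j => z (i, j)) = fun j => z (i, j) from by ext j; simp] at this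

lemma hasEig_reindex (e : I ≃ J) (M : Matrix I I ℝ) (μ : ℝ) :
    HasEig (Matrix.reindex e e M) μ ↔ HasEig M μ := by
  constructor
  · rintro ⟨v, hv, hev⟩
    refine ⟨v ∘ e, ?_, ?_⟩
    · intro h0
      apply hv
      funext j
      have := congr_fun h0 (e.symm j)
      simpa using this
    · rw [Matrix.reindex_apply, Matrix.submatrix_mulVec_equiv] at hev
      funext i
      have := congr_fun hev (e i)
      simpa using this
  · rintro ⟨v, hv, hev⟩
    refine ⟨v ∘ e.symm, ?_, ?_⟩
    · intro h0
      apply hv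
      funext i
      have := congr_fun h0 (e i)
      simpa using this
    · rw [Matrix.reindex_apply, Matrix.submatrix_mulVec_equiv]
      have hcomp : (v ∘ ⇑e.symm) ∘ ⇑e.symm.symm = v := by funext i; simp
      rw [hcomp, hev]
      funext j
      simp

lemma hasEig_kron_sum [DecidableEq I] [DecidableEq J] {X : Matrix I I ℝ} {Y : Matrix J J ℝ}
    {a b : ℝ} (hX : HasEig X a) (hY : HasEig Y b) :
    HasEig (X ⊗ₖ (1 : Matrix J J ℝ) + (1 : Matrix I I ℝ) ⊗ₖ Y) (a + b) := by
  obtain ⟨u, hu, heu⟩ := hX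
  obtain ⟨v, hv, hev⟩ := hY
  obtain ⟨i0, hi0⟩ := Function.ne_iff.mp hu
  obtain ⟨j0, hj0⟩ := Function.ne_iff.mp hv
  refine ⟨fun p => u p.1 * v p.2, ?_, ?_⟩
  · intro h0
    have := congr_fun h0 (i0, j0)
    simp only [Pi.zero_apply] at this
    exact (mul_ne_zero hi0 hj0) this
  · funext p
    obtain ⟨i, j⟩ := p
    rw [Matrix.add_mulVec]
    simp only [Pi.add_apply, Pi.smul_apply, smul_eq_mul]
    rw [kron_one_mulVec, one_kron_mulVec]
    have h1 : (X *ᵥ fun i' => u i' * v j) i = (a * u i) * v j := by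
      have : (fun i' => u i' * v j) = v j • u := by funext i'; simp [mul_comm]
      rw [this, Matrix.mulVec_smul, heu]
      simp [mul_comm, mul_assoc, mul_left_comm]
    have h2 : (Y *ᵥ fun j' => u i * v j') j = u i * (b * v j) := by
      have : (fun j' => u i * v j') = u i • v := by funext j'; simp
      rw [this, Matrix.mulVec_smul, hev]
      simp [mul_comm, mul_assoc, mul_left_comm]
    rw [h1, h2]
    ring

end Infra

lemma signedPath_symm (n : ℕ) : (signedPath n)ᵀ = signedPath n := by
  ext i j
  rw [Matrix.transpose_apply, signedPath_apply, signedPath_apply]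
  exact add_comm _ _

lemma altDiag_symm (n : ℕ) : (altDiag n)ᵀ = altDiag n := by
  rw [altDiag, Matrix.diagonal_transpose]

lemma altDiag_sq (n : ℕ) : altDiag n * altDiag n = 1 := by
  rw [altDiag, Matrix.diagonal_mul_diagonal]
  have : (fun i : Fin (2 * n) => (if (i : ℕ) % 2 = 0 then (1 : ℝ) else -1) *
      (if (i : ℕ) % 2 = 0 then (1 : ℝ) else -1)) = fun _ => (1 : ℝ) := by
    funext i
    split_ifs <;> norm_num
  rw [this, Matrix.diagonal_one]

lemma anticomm (n : ℕ) :
    signedPath n * altDiag n + altDiag n * signedPath n = 0 := by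
  ext i j
  rw [Matrix.add_apply, Matrix.zero_apply, altDiag, Matrix.mul_diagonal, Matrix.diagonal_mul,
    signedPath_apply]
  unfold sgn
  split_ifs <;> first | ring1 | (exfalso; omega)

lemma BD_eq_neg_DB (n : ℕ) :
    signedPath n * altDiag n = -(altDiag n * signedPath n) :=
  eq_neg_of_add_eq_zero_left (anticomm n)

lemma APn_zero_def (n : ℕ) : APn n 0 = Matrix.reindex
    (Equiv.funUnique (Fin 1) (Fin (2 * n))).symm
    (Equiv.funUnique (Fin 1) (Fin (2 * n))).symm (signedPath n) := by
  rw [APn]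

lemma APn_succ_def (n k : ℕ) : APn n (k + 1) =
    Matrix.reindex (Fin.consEquiv fun _ : Fin (k + 2) => Fin (2 * n))
      (Fin.consEquiv fun _ : Fin (k + 2) => Fin (2 * n))
      (signedPath n ⊗ₖ
          (1 : Matrix (Fin (k + 1) → Fin (2 * n)) (Fin (k + 1) → Fin (2 * n)) ℝ)
        + altDiag n ⊗ₖ APn n k) := by
  rw [APn]

lemma APn_symm (n : ℕ) : ∀ k, (APn n k)ᵀ = APn n k := by
  intro k
  induction k with
  | zero =>
    rw [APn_zero_def, Matrix.transpose_reindex, signedPath_symm]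
  | succ k ih =>
    rw [APn_succ_def, Matrix.transpose_reindex, Matrix.transpose_add,
      ← Matrix.kroneckerMap_transpose, ← Matrix.kroneckerMap_transpose,
      Matrix.transpose_one, signedPath_symm, altDiag_symm, ih]

lemma APn_sq_succ (n k : ℕ) :
    APn n (k + 1) * APn n (k + 1) =
      Matrix.reindex (Fin.consEquiv fun _ : Fin (k + 2) => Fin (2 * n))
        (Fin.consEquiv fun _ : Fin (k + 2) => Fin (2 * n))
        ((signedPath n * signedPath n) ⊗ₖ
            (1 : Matrix (Fin (k + 1) → Fin (2 * n)) (Fin (k + 1) → Fin (2 * n)) ℝ)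
          + (1 : Matrix (Fin (2 * n)) (Fin (2 * n)) ℝ) ⊗ₖ (APn n k * APn n k)) := by
  rw [APn_succ_def, Matrix.reindex_apply, Matrix.reindex_apply, Matrix.submatrix_mul_equiv]
  set B := signedPath n
  set D := altDiag n
  set M := APn n k
  set O1 := (1 : Matrix (Fin (k + 1) → Fin (2 * n)) (Fin (k + 1) → Fin (2 * n)) ℝ)
  have key : (B ⊗ₖ O1 + D ⊗ₖ M) * (B ⊗ₖ O1 + D ⊗ₖ M) =
      (B * B) ⊗ₖ O1 + (1 : Matrix (Fin (2 * n)) (Fin (2 * n)) ℝ) ⊗ₖ (M * M) := by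
    rw [add_mul, mul_add, mul_add]
    rw [← Matrix.mul_kronecker_mul, ← Matrix.mul_kronecker_mul, ← Matrix.mul_kronecker_mul,
      ← Matrix.mul_kronecker_mul]
    rw [Matrix.one_mul, Matrix.mul_one, Matrix.one_mul, altDiag_sq]
    rw [BD_eq_neg_DB]
    have hneg : (-(D * B)) ⊗ₖ M = -((D * B) ⊗ₖ M) := by
      have h1 : -(D * B) = (-1 : ℝ) • (D * B) := by rw [neg_one_smul]
      rw [h1, Matrix.smul_kronecker, neg_one_smul]
    rw [hneg]
    abel
  rw [key]


lemma kron_shift {I J : Type*} [Fintype I] [Fintype J] [DecidableEq I] [DecidableEq J]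
    (X : Matrix I I ℝ) (Y : Matrix J J ℝ) (a b : ℝ) :
    (X - a • 1) ⊗ₖ (1 : Matrix J J ℝ) + (1 : Matrix I I ℝ) ⊗ₖ (Y - b • 1) =
      (X ⊗ₖ (1 : Matrix J J ℝ) + (1 : Matrix I I ℝ) ⊗ₖ Y) - (a + b) • 1 := by
  have h1 : (X - a • 1) ⊗ₖ (1 : Matrix J J ℝ) =
      X ⊗ₖ (1 : Matrix J J ℝ) - a • ((1 : Matrix I I ℝ) ⊗ₖ (1 : Matrix J J ℝ)) := by
    rw [sub_eq_add_neg, ← neg_one_smul ℝ (a • (1 : Matrix I I ℝ))]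
    rw [show (-1 : ℝ) • (a • (1 : Matrix I I ℝ)) = (-a) • (1 : Matrix I I ℝ) from by
      rw [smul_smul]; norm_num]
    rw [Matrix.add_kronecker, Matrix.smul_kronecker]
    rw [sub_eq_add_neg, ← neg_smul]
  have h2 : (1 : Matrix I I ℝ) ⊗ₖ (Y - b • 1) =
      (1 : Matrix I I ℝ) ⊗ₖ Y - b • ((1 : Matrix I I ℝ) ⊗ₖ (1 : Matrix J J ℝ)) := by
    rw [sub_eq_add_neg, ← neg_one_smul ℝ (b • (1 : Matrix J J ℝ))]
    rw [show (-1 : ℝ) • (b • (1 : Matrix J J ℝ)) = (-b) • (1 : Matrix J J ℝ) from by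
      rw [smul_smul]; norm_num]
    rw [Matrix.kronecker_add, Matrix.kronecker_smul]
    rw [sub_eq_add_neg, ← neg_smul]
  rw [h1, h2, Matrix.one_kronecker_one, add_smul]
  abel


/-- Fix `n ≥ 1` and let `β > 0` be a root of `g_n` such that `g_n` has no root in
`(0, β)`. For every `k ≥ 1` (here `APn n k` is the paper's `A_{k+1}`, `k : ℕ`), the
minimum eigenvalue of `A_k²` equals `kβ`: every eigenvalue `μ` of `A_k²` satisfies
`μ ≥ kβ`, and `kβ` is an eigenvalue of `A_k²`. -/
theorem APn_sq_min_eigenvalue (n : ℕ) (hn : 1 ≤ n)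
    (β : ℝ) (hβpos : 0 < β) (hroot : gPoly n β = 0)
    (hmin : ∀ x : ℝ, 0 < x → x < β → gPoly n x ≠ 0) (k : ℕ) :
    (∀ μ : ℝ, HasEig ((APn n k) ^ 2) μ → ((k : ℝ) + 1) * β ≤ μ) ∧
    HasEig ((APn n k) ^ 2) (((k : ℝ) + 1) * β) := by
  have hSsym : (signedPath n)ᵀ = signedPath n := signedPath_symm n
  have hSsqsym : (signedPath n * signedPath n)ᵀ = signedPath n * signedPath n := by
    rw [Matrix.transpose_mul, hSsym]
  have hbase_bound : ∀ μ, HasEig (signedPath n * signedPath n) μ → β ≤ μ := by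
    intro μ hμ
    have hnn : 0 ≤ μ := hasEig_sq_nonneg hSsym hμ
    obtain ⟨x, hx, he⟩ := hμ
    have hg : gPoly n μ = 0 := by
      apply base_root n hn μ x hx
      rw [Matrix.mulVec_mulVec]
      exact he
    by_contra hlt
    push_neg at hlt
    rcases eq_or_lt_of_le hnn with heq | hpos
    · rw [← heq, gPoly_zero] at hg
      exact pow_ne_zero n (by norm_num : (-1 : ℝ) ≠ 0) hg
    · exact hmin μ hpos hlt hg
  have hbase_ex : HasEig (signedPath n * signedPath n) β := by
    obtain ⟨x, hx, he⟩ := base_exists n hn β hroot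
    refine ⟨x, hx, ?_⟩
    rw [← Matrix.mulVec_mulVec]
    exact he
  induction k with
  | zero =>
    have h0 : (APn n 0) ^ 2 = Matrix.reindex (Equiv.funUnique (Fin 1) (Fin (2 * n))).symm
        (Equiv.funUnique (Fin 1) (Fin (2 * n))).symm (signedPath n * signedPath n) := by
      rw [pow_two, APn_zero_def, Matrix.reindex_apply, Matrix.reindex_apply,
        Matrix.submatrix_mul_equiv, ← Matrix.reindex_apply]
    rw [h0]
    constructor
    · intro μ hμ
      rw [hasEig_reindex] at hμ
      have := hbase_bound μ hμ
      norm_num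
      linarith
    · rw [hasEig_reindex]
      norm_num
      exact hbase_ex
  | succ k ih =>
    set E := Fin.consEquiv (fun _ : Fin (k + 2) => Fin (2 * n)) with hE
    have hsq : (APn n (k + 1)) ^ 2 = Matrix.reindex E E
        ((signedPath n * signedPath n) ⊗ₖ
            (1 : Matrix (Fin (k + 1) → Fin (2 * n)) (Fin (k + 1) → Fin (2 * n)) ℝ)
          + (1 : Matrix (Fin (2 * n)) (Fin (2 * n)) ℝ) ⊗ₖ (APn n k * APn n k)) := by
      rw [pow_two]
      exact APn_sq_succ n k
    have hMsym : (APn n k * APn n k)ᵀ = APn n k * APn n k := by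
      rw [Matrix.transpose_mul, APn_symm]
    have hih1 : ∀ μ, HasEig (APn n k * APn n k) μ → ((k : ℝ) + 1) * β ≤ μ := by
      intro μ hμ
      apply ih.1
      rw [pow_two]
      exact hμ
    have hih2 : HasEig (APn n k * APn n k) (((k : ℝ) + 1) * β) := by
      have := ih.2
      rw [pow_two] at this
      exact this
    have hpsd1 : ((signedPath n * signedPath n) - β • 1).PosSemidef :=
      psd_of_hasEig_ge hSsqsym hbase_bound
    have hpsd2 : ((APn n k * APn n k) - (((k : ℝ) + 1) * β) • 1).PosSemidef :=
      psd_of_hasEig_ge hMsym hih1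
    have hpsdsum : (((signedPath n * signedPath n) ⊗ₖ
        (1 : Matrix (Fin (k + 1) → Fin (2 * n)) (Fin (k + 1) → Fin (2 * n)) ℝ)
          + (1 : Matrix (Fin (2 * n)) (Fin (2 * n)) ℝ) ⊗ₖ (APn n k * APn n k))
          - (β + ((k : ℝ) + 1) * β) • 1).PosSemidef := by
      rw [← kron_shift]
      exact psd_add (psd_kron_one hpsd1) (psd_one_kron hpsd2)
    constructor
    · intro μ hμ
      rw [hsq, hasEig_reindex] at hμ
      have := hasEig_ge_of_psd hpsdsum hμ
      push_cast
      push_cast at this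
      linarith
    · rw [hsq, hasEig_reindex]
      have := hasEig_kron_sum hbase_ex hih2
      have heq : β + ((k : ℝ) + 1) * β = ((((k : ℕ) + 1 : ℕ) : ℝ) + 1) * β := by
        push_cast
        ring
      rw [heq] at this
      exact this
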